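/- For every L ≥ 1 and all u, v ∈ ℂ, the row-to-row transfer matrices of the rational su(n) model commute: t(u) t(v) = t(v) t(u) as operators on V^{⊗L}. -/

import Mathlib

open Complex

/-- The rational `su(n)` R-matrix `R(v) = v·id + P` on `V ⊗ V`, `V = ℂ^n`, in components:
`R(v)^{a′b′}_{ab} = v δ_{a a′} δ_{b b′} + δ_{a′ b} δ_{a b′}`. Row `(a′,b′)`, column `(a,b)`. -/
noncomputable def Rmat (n : ℕ) (v : ℂ) :
    Matrix (Fin n × Fin n) (Fin n × Fin n) ℂ := fun p q =>
  (if p.1 = q.1 then v else 0) * (if p.2 = q.2 then 1 else 0) +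
    (if p.1 = q.2 then 1 else 0) * (if p.2 = q.1 then 1 else 0)

/-- Cyclic successor `j ↦ j + 1 (mod L)` on `Fin L`. -/
def cyc {L : ℕ} (j : Fin L) : Fin L := ⟨(j.1 + 1) % L, Nat.mod_lt _ j.pos⟩

/-- The row-to-row transfer matrix of the rational `su(n)` model on `V^{⊗L}`:
`t(v)^{α₁…α_L}_{β₁…β_L} = Σ_ν ∏_j R(v)^{ν_{j+1} α_j}_{ν_j β_j}`, with `ν_{L+1} = ν₁`. -/
noncomputable def transferMatrix (n L : ℕ) (v : ℂ) :
    Matrix (Fin L → Fin n) (Fin L → Fin n) ℂ := fun α β =>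
  ∑ ν : Fin L → Fin n, ∏ j : Fin L, Rmat n v (ν (cyc j), α j) (ν j, β j)

section Generic

variable {R : Type*} [CommRing R]

/-- generic R-matrix over any commutative ring -/
def RmatG (n : ℕ) (v : R) : Matrix (Fin n × Fin n) (Fin n × Fin n) R := fun p q =>
  (if p.1 = q.1 then v else 0) * (if p.2 = q.2 then 1 else 0) +
    (if p.1 = q.2 then 1 else 0) * (if p.2 = q.1 then 1 else 0)

/-- generic transfer-type sum with auxiliary space `W`. -/
def tSumG {W : Type*} [Fintype W] (n L : ℕ) (M : Matrix (W × Fin n) (W × Fin n) R) :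
    Matrix (Fin L → Fin n) (Fin L → Fin n) R := fun α β =>
  ∑ ν : Fin L → W, ∏ j : Fin L, M (ν (cyc j), α j) (ν j, β j)

lemma transferMatrix_eq_tSumG (n L : ℕ) (v : ℂ) :
    transferMatrix n L v = tSumG n L (RmatG n v) := rfl

lemma cyc_eq_add_one {L : ℕ} [NeZero L] (j : Fin L) : cyc j = j + 1 := by
  apply Fin.ext
  simp [cyc, Fin.add_def, Nat.add_mod]

def cycEquiv (L : ℕ) [NeZero L] : Fin L ≃ Fin L := Equiv.addRight 1

lemma cycEquiv_apply {L : ℕ} [NeZero L] (j : Fin L) : cycEquiv L j = cyc j := by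
  rw [cyc_eq_add_one]; rfl

end Generic

section Lifts

variable {R : Type*} [CommRing R] {n : ℕ}

/-- put a `V⊗V` matrix on factors 1,3 of `(V×V)×V`. -/
def lift13 (M : Matrix (Fin n × Fin n) (Fin n × Fin n) R) :
    Matrix ((Fin n × Fin n) × Fin n) ((Fin n × Fin n) × Fin n) R := fun p q =>
  M (p.1.1, p.2) (q.1.1, q.2) * (if p.1.2 = q.1.2 then 1 else 0)

def lift23 (M : Matrix (Fin n × Fin n) (Fin n × Fin n) R) :
    Matrix ((Fin n × Fin n) × Fin n) ((Fin n × Fin n) × Fin n) R := fun p q =>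
  M (p.1.2, p.2) (q.1.2, q.2) * (if p.1.1 = q.1.1 then 1 else 0)

def lift12 (M : Matrix (Fin n × Fin n) (Fin n × Fin n) R) :
    Matrix ((Fin n × Fin n) × Fin n) ((Fin n × Fin n) × Fin n) R := fun p q =>
  M p.1 q.1 * (if p.2 = q.2 then 1 else 0)

/-- the combined local operator giving the product of two transfer matrices -/
def comb {W₁ W₂ : Type*} [Fintype W₁] [Fintype W₂]
    (M : Matrix (W₁ × Fin n) (W₁ × Fin n) R) (N : Matrix (W₂ × Fin n) (W₂ × Fin n) R) :
    Matrix ((W₁ × W₂) × Fin n) ((W₁ × W₂) × Fin n) R := fun p q =>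
  ∑ g : Fin n, M (p.1.1, p.2) (q.1.1, g) * N (p.1.2, g) (q.1.2, q.2)

lemma comb_eq_lift_mul (M N : Matrix (Fin n × Fin n) (Fin n × Fin n) R) :
    comb M N = lift13 M * lift23 N := by
  ext ⟨⟨a', b'⟩, c'⟩ ⟨⟨a, b⟩, c⟩
  simp only [comb, lift13, lift23, Matrix.mul_apply, Fintype.sum_prod_type]
  simp [mul_ite, ite_mul, Finset.sum_ite_eq, Finset.sum_ite_eq']

end Lifts

section TSumMul

variable {R : Type*} [CommRing R] {n L : ℕ}

lemma tSumG_mul {W₁ W₂ : Type*} [Fintype W₁] [Fintype W₂]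
    (M : Matrix (W₁ × Fin n) (W₁ × Fin n) R) (N : Matrix (W₂ × Fin n) (W₂ × Fin n) R) :
    tSumG n L M * tSumG n L N = tSumG n L (comb M N) := by
  ext α β
  simp only [tSumG, Matrix.mul_apply, comb]
  calc
    ∑ γ : Fin L → Fin n, (∑ ν : Fin L → W₁, ∏ j, M (ν (cyc j), α j) (ν j, γ j)) *
        (∑ μ : Fin L → W₂, ∏ j, N (μ (cyc j), γ j) (μ j, β j))
      = ∑ ν : Fin L → W₁, ∑ μ : Fin L → W₂, ∑ γ : Fin L → Fin n,
          ∏ j, (M (ν (cyc j), α j) (ν j, γ j) * N (μ (cyc j), γ j) (μ j, β j)) := by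
        simp only [Finset.sum_mul_sum, ← Finset.prod_mul_distrib]
        rw [Finset.sum_comm]
        exact Finset.sum_congr rfl fun ν _ => Finset.sum_comm
    _ = ∑ ν : Fin L → W₁, ∑ μ : Fin L → W₂,
          ∏ j, ∑ g : Fin n, M (ν (cyc j), α j) (ν j, g) * N (μ (cyc j), g) (μ j, β j) := by
        refine Finset.sum_congr rfl fun ν _ => Finset.sum_congr rfl fun μ _ => ?_
        rw [Fintype.prod_sum]
    _ = ∑ ρ : Fin L → W₁ × W₂,
          ∏ j, ∑ g, M ((ρ (cyc j)).1, α j) ((ρ j).1, g) * N ((ρ (cyc j)).2, g) ((ρ j).2, β j) := by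
        rw [← Equiv.sum_comp (Equiv.arrowProdEquivProdArrow (Fin L) (fun _ => W₁) (fun _ => W₂)).symm]
        rw [Fintype.sum_prod_type]
        rfl

end TSumMul

section Reindex

variable {R : Type*} [CommRing R] {n L : ℕ}

lemma tSumG_reindex {W : Type*} [Fintype W] (e : W ≃ W)
    (M : Matrix (W × Fin n) (W × Fin n) R) :
    tSumG n L (fun p q => M (e p.1, p.2) (e q.1, q.2)) = tSumG n L M := by
  ext α β
  simp only [tSumG]
  exact Fintype.sum_equiv (Equiv.arrowCongr (Equiv.refl (Fin L)) e) _ _ (fun ν => rfl)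

/-- conjugation invariance of the cyclic transfer-type sum -/
lemma cyclic_sum_conj {W : Type*} [Fintype W] [DecidableEq W] [NeZero L]
    (A : Fin L → Matrix W W R) (S S' : Matrix W W R) (h1 : S' * S = 1) :
    ∑ ν : Fin L → W, ∏ j, (S * A j * S') (ν (cyc j)) (ν j)
      = ∑ ν : Fin L → W, ∏ j, A j (ν (cyc j)) (ν j) := by
  have hexp : ∀ (x y : W) (j : Fin L), (S * A j * S') x y
      = ∑ pq : W × W, S x pq.1 * A j pq.1 pq.2 * S' pq.2 y := by
    intro x y j
    simp only [Matrix.mul_apply, Fintype.sum_prod_type, Finset.sum_mul, Finset.mul_sum, mul_assoc]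
    rw [Finset.sum_comm]
  calc
    ∑ ν : Fin L → W, ∏ j, (S * A j * S') (ν (cyc j)) (ν j)
      = ∑ ν : Fin L → W, ∑ σ : Fin L → W × W,
          ∏ j, (S (ν (cyc j)) (σ j).1 * A j (σ j).1 (σ j).2 * S' (σ j).2 (ν j)) := by
        refine Finset.sum_congr rfl fun ν _ => ?_
        simp only [hexp]
        rw [Fintype.prod_sum]
    _ = ∑ σ : Fin L → W × W, (∏ j, A j (σ j).1 (σ j).2) *
          ∑ ν : Fin L → W, ∏ j, (S' ((σ j).2) (ν j) * S (ν j) ((σ ((cycEquiv L).symm j)).1)) := by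
        rw [Finset.sum_comm]
        refine Finset.sum_congr rfl fun σ _ => ?_
        rw [Finset.mul_sum]
        refine Finset.sum_congr rfl fun ν _ => ?_
        have h2 : ∏ j, S (ν (cyc j)) ((σ j).1)
            = ∏ j, S (ν j) ((σ ((cycEquiv L).symm j)).1) := by
          rw [← Equiv.prod_comp (cycEquiv L)
            (fun j => S (ν j) ((σ ((cycEquiv L).symm j)).1))]
          refine Finset.prod_congr rfl fun j _ => ?_
          rw [Equiv.symm_apply_apply, cycEquiv_apply]
        calc
          ∏ j, (S (ν (cyc j)) (σ j).1 * A j (σ j).1 (σ j).2 * S' (σ j).2 (ν j))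
            = (∏ j, A j (σ j).1 (σ j).2) *
                ((∏ j, S (ν (cyc j)) (σ j).1) * ∏ j, S' (σ j).2 (ν j)) := by
              rw [← Finset.prod_mul_distrib, ← Finset.prod_mul_distrib]
              exact Finset.prod_congr rfl fun j _ => by ring
          _ = (∏ j, A j (σ j).1 (σ j).2) *
                ∏ j, (S' ((σ j).2) (ν j) * S (ν j) ((σ ((cycEquiv L).symm j)).1)) := by
              rw [h2, ← Finset.prod_mul_distrib]
              congr 1
              exact Finset.prod_congr rfl fun j _ => by ring
    _ = ∑ σ : Fin L → W × W, (∏ j, A j (σ j).1 (σ j).2) *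
          ∏ j, (S' * S) ((σ j).2) ((σ ((cycEquiv L).symm j)).1) := by
        refine Finset.sum_congr rfl fun σ _ => ?_
        congr 1
        simp only [Matrix.mul_apply]
        rw [Fintype.prod_sum]
    _ = ∑ σ : Fin L → W × W, (∏ j, A j (σ j).1 (σ j).2) *
          (if (fun j => (σ j).2) = (fun j => (σ ((cycEquiv L).symm j)).1) then 1 else 0) := by
        refine Finset.sum_congr rfl fun σ _ => ?_
        congr 1
        rw [h1]
        simp only [Matrix.one_apply]
        rw [Finset.prod_boole]
        congr 1
        simp [funext_iff]
    _ = ∑ p : Fin L → W, ∏ j, A j (p j) (p ((cycEquiv L).symm j)) := by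
        rw [← Equiv.sum_comp (Equiv.arrowProdEquivProdArrow (Fin L) (fun _ => W) (fun _ => W)).symm]
        simp only [Equiv.arrowProdEquivProdArrow]
        rw [Fintype.sum_prod_type]
        refine Finset.sum_congr rfl fun p _ => ?_
        show (∑ x : Fin L → W, (∏ j, A j (p j) (x j)) *
          if (fun j => x j) = (fun j => p ((cycEquiv L).symm j)) then 1 else 0) = _
        simp only [Equiv.coe_fn_symm_mk, mul_ite, mul_one, mul_zero]
        rw [show (∑ x : Fin L → W, if (fun j => x j) = (fun j => p ((cycEquiv L).symm j)) then
            (∏ j, A j (p j) (x j)) else 0)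
          = ∑ x : Fin L → W, if x = (fun j => p ((cycEquiv L).symm j)) then
            (∏ j, A j (p j) (x j)) else 0 from rfl]
        rw [Finset.sum_ite_eq' Finset.univ (fun j => p ((cycEquiv L).symm j))
          (fun q => ∏ j, A j (p j) (q j))]
        simp
    _ = ∑ ν : Fin L → W, ∏ j, A j (ν (cyc j)) (ν j) := by
        refine Fintype.sum_equiv (Equiv.arrowCongr (cycEquiv L) (Equiv.refl W)) _ _ fun p => ?_
        refine Finset.prod_congr rfl fun j _ => ?_
        simp only [Equiv.arrowCongr_apply, Equiv.refl_apply, Function.comp]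
        rw [← cycEquiv_apply, Equiv.symm_apply_apply]

end Reindex

section Conj

variable {R : Type*} [CommRing R] {n L : ℕ} {W : Type*} [Fintype W] [DecidableEq W]

/-- lift a matrix on the auxiliary space `W` to `W ⊗ V` -/
def liftW (n : ℕ) (S : Matrix W W R) : Matrix (W × Fin n) (W × Fin n) R := fun p q =>
  S p.1 q.1 * (if p.2 = q.2 then 1 else 0)

def sliceM (M : Matrix (W × Fin n) (W × Fin n) R) (a b : Fin n) : Matrix W W R :=
  fun w' w => M (w', a) (w, b)

lemma liftW_mul (S T : Matrix W W R) : liftW n S * liftW n T = liftW n (S * T) := by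
  ext p q
  simp only [liftW, Matrix.mul_apply, Fintype.sum_prod_type]
  simp [mul_ite, ite_mul, Finset.sum_ite_eq, Finset.sum_ite_eq', Finset.mul_sum]

lemma liftW_one : liftW n (1 : Matrix W W R) = 1 := by
  ext p q
  simp only [liftW, Matrix.one_apply, Prod.ext_iff]
  simp [ite_and, Prod.ext_iff]
  try (split_ifs <;> simp_all)

lemma slice_conj (S S' : Matrix W W R) (M : Matrix (W × Fin n) (W × Fin n) R) (a b : Fin n) :
    sliceM (liftW n S * M * liftW n S') a b = S * sliceM M a b * S' := by
  ext w' w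
  simp only [sliceM, liftW, Matrix.mul_apply, Fintype.sum_prod_type]
  simp [mul_ite, ite_mul, Finset.sum_ite_eq, Finset.sum_ite_eq', Finset.mul_sum,
    Finset.sum_mul, mul_assoc]

lemma tSumG_conj [NeZero L] (M : Matrix (W × Fin n) (W × Fin n) R)
    (S S' : Matrix W W R) (h1 : S' * S = 1) :
    tSumG n L (liftW n S * M * liftW n S') = tSumG n L M := by
  ext α β
  simp only [tSumG]
  have := cyclic_sum_conj (L := L) (fun j => sliceM M (α j) (β j)) S S' h1
  calc
    ∑ ν : Fin L → W, ∏ j, (liftW n S * M * liftW n S') (ν (cyc j), α j) (ν j, β j)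
      = ∑ ν : Fin L → W, ∏ j, (S * sliceM M (α j) (β j) * S') (ν (cyc j)) (ν j) := by
        refine Finset.sum_congr rfl fun ν _ => Finset.prod_congr rfl fun j _ => ?_
        rw [← slice_conj S S' M (α j) (β j)]
        rfl
    _ = ∑ ν : Fin L → W, ∏ j, sliceM M (α j) (β j) (ν (cyc j)) (ν j) := this
    _ = ∑ ν : Fin L → W, ∏ j, M (ν (cyc j), α j) (ν j, β j) := rfl

/-- intertwining implies equality of transfer-type sums -/
lemma tSumG_intertwine [NeZero L] (M M' : Matrix (W × Fin n) (W × Fin n) R)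
    (S S' : Matrix W W R) (h1 : S' * S = 1) (h2 : S * S' = 1)
    (h : liftW n S * M = M' * liftW n S) :
    tSumG n L M' = tSumG n L M := by
  have hM' : M' = liftW n S * M * liftW n S' := by
    calc M' = M' * (liftW n S * liftW n S') := by rw [liftW_mul, h2, liftW_one, mul_one]
    _ = (M' * liftW n S) * liftW n S' := by rw [mul_assoc]
    _ = liftW n S * M * liftW n S' := by rw [← h]
  rw [hM', tSumG_conj M S S' h1]

end Conj

section Perm

variable {R : Type*} [CommRing R] {n : ℕ}

def permT {I : Type*} [DecidableEq I] (e : I ≃ I) : Matrix I I R := fun p q =>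
  if p = e q then 1 else 0

lemma permT_mul {I : Type*} [DecidableEq I] [Fintype I] (e f : I ≃ I) :
    (permT e : Matrix I I R) * permT f = permT (f.trans e) := by
  ext p q
  simp [Matrix.mul_apply, permT, mul_ite, Finset.sum_ite_eq, Finset.sum_ite_eq']
  congr

/-- permutation matrix `P` on `V ⊗ V` -/
def PmG (n : ℕ) : Matrix (Fin n × Fin n) (Fin n × Fin n) R := fun p q =>
  (if p.1 = q.2 then 1 else 0) * (if p.2 = q.1 then 1 else 0)

lemma RmatG_eq (v : R) : RmatG n v = v • (1 : Matrix (Fin n × Fin n) (Fin n × Fin n) R) + PmG n := by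
  ext p q
  simp only [RmatG, PmG, Matrix.add_apply, Matrix.smul_apply, Matrix.one_apply, Prod.ext_iff,
    smul_eq_mul]
  congr 1
  simp [ite_and, mul_ite]
  try (split_ifs <;> simp_all)

abbrev TT (n : ℕ) := (Fin n × Fin n) × Fin n

def eqv12 (n : ℕ) : TT n ≃ TT n :=
  ⟨fun p => ((p.1.2, p.1.1), p.2), fun p => ((p.1.2, p.1.1), p.2), fun p => rfl, fun p => rfl⟩
def eqv13 (n : ℕ) : TT n ≃ TT n :=
  ⟨fun p => ((p.2, p.1.2), p.1.1), fun p => ((p.2, p.1.2), p.1.1), fun p => rfl, fun p => rfl⟩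
def eqv23 (n : ℕ) : TT n ≃ TT n :=
  ⟨fun p => ((p.1.1, p.2), p.1.2), fun p => ((p.1.1, p.2), p.1.2), fun p => rfl, fun p => rfl⟩
def cEq1 (n : ℕ) : TT n ≃ TT n :=
  ⟨fun p => ((p.1.2, p.2), p.1.1), fun p => ((p.2, p.1.1), p.1.2), fun p => rfl, fun p => rfl⟩
def cEq2 (n : ℕ) : TT n ≃ TT n :=
  ⟨fun p => ((p.2, p.1.1), p.1.2), fun p => ((p.1.2, p.2), p.1.1), fun p => rfl, fun p => rfl⟩
lemma trans_a : (eqv23 n).trans (eqv13 n) = cEq1 n := by apply Equiv.ext; intro p; rfl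
lemma trans_b : (eqv13 n).trans (eqv12 n) = cEq1 n := by apply Equiv.ext; intro p; rfl
lemma trans_c : (eqv12 n).trans (eqv23 n) = cEq1 n := by apply Equiv.ext; intro p; rfl
lemma trans_d : (eqv23 n).trans (eqv12 n) = cEq2 n := by apply Equiv.ext; intro p; rfl
lemma trans_e : (eqv12 n).trans (eqv13 n) = cEq2 n := by apply Equiv.ext; intro p; rfl
lemma trans_f : (eqv13 n).trans (eqv23 n) = cEq2 n := by apply Equiv.ext; intro p; rfl
lemma trans_g : (cEq1 n).trans (eqv12 n) = eqv13 n := by apply Equiv.ext; intro p; rfl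
lemma trans_h : (eqv12 n).trans (cEq2 n) = eqv13 n := by apply Equiv.ext; intro p; rfl

end Perm

section LiftPerm

variable {R : Type*} [CommRing R] {n : ℕ}

lemma liftW_Pm : liftW n (PmG n : Matrix (Fin n × Fin n) (Fin n × Fin n) R) = permT (eqv12 n) := by
  ext p q
  simp only [liftW, PmG, permT, eqv12, Equiv.coe_fn_mk, Prod.ext_iff]
  simp [ite_and]
  try (split_ifs <;> simp_all)

lemma lift13_Pm : lift13 (PmG n : Matrix (Fin n × Fin n) (Fin n × Fin n) R) = permT (eqv13 n) := by
  ext p q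
  simp only [lift13, PmG, permT, eqv13, Equiv.coe_fn_mk, Prod.ext_iff]
  simp [ite_and]
  try (split_ifs <;> simp_all)

lemma lift23_Pm : lift23 (PmG n : Matrix (Fin n × Fin n) (Fin n × Fin n) R) = permT (eqv23 n) := by
  ext p q
  simp only [lift23, PmG, permT, eqv23, Equiv.coe_fn_mk, Prod.ext_iff]
  simp [ite_and]
  try (split_ifs <;> simp_all)

lemma lift13_one : lift13 (1 : Matrix (Fin n × Fin n) (Fin n × Fin n) R) = 1 := by
  ext p q
  simp only [lift13, Matrix.one_apply, Prod.ext_iff]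
  simp [ite_and]
  try (split_ifs <;> simp_all)

lemma lift23_one : lift23 (1 : Matrix (Fin n × Fin n) (Fin n × Fin n) R) = 1 := by
  ext p q
  simp only [lift23, Matrix.one_apply, Prod.ext_iff]
  simp [ite_and]
  try (split_ifs <;> simp_all)

lemma lift13_add (M N : Matrix (Fin n × Fin n) (Fin n × Fin n) R) :
    lift13 (M + N) = lift13 M + lift13 N := by
  ext p q; simp [lift13, add_mul]; split_ifs <;> simp

lemma lift23_add (M N : Matrix (Fin n × Fin n) (Fin n × Fin n) R) :
    lift23 (M + N) = lift23 M + lift23 N := by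
  ext p q; simp [lift23, add_mul]; split_ifs <;> simp

lemma liftW_add (M N : Matrix (Fin n × Fin n) (Fin n × Fin n) R) :
    liftW n (M + N) = liftW n M + liftW n N := by
  ext p q; simp [liftW, add_mul]; split_ifs <;> simp

lemma lift13_smul (v : R) (M : Matrix (Fin n × Fin n) (Fin n × Fin n) R) :
    lift13 (v • M) = v • lift13 M := by
  ext p q; simp [lift13, mul_assoc]

lemma lift23_smul (v : R) (M : Matrix (Fin n × Fin n) (Fin n × Fin n) R) :
    lift23 (v • M) = v • lift23 M := by
  ext p q; simp [lift23, mul_assoc]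

lemma liftW_smul (v : R) (M : Matrix (Fin n × Fin n) (Fin n × Fin n) R) :
    liftW n (v • M) = v • liftW n M := by
  ext p q; simp [liftW, mul_assoc]

lemma lift13_R (v : R) : lift13 (RmatG n v) = v • (1 : Matrix (TT n) (TT n) R) + permT (eqv13 n) := by
  rw [RmatG_eq, lift13_add, lift13_smul, lift13_one, lift13_Pm]

lemma lift23_R (v : R) : lift23 (RmatG n v) = v • (1 : Matrix (TT n) (TT n) R) + permT (eqv23 n) := by
  rw [RmatG_eq, lift23_add, lift23_smul, lift23_one, lift23_Pm]

lemma liftW_R (v : R) : liftW n (RmatG n v) = v • (1 : Matrix (TT n) (TT n) R) + permT (eqv12 n) := by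
  rw [RmatG_eq, liftW_add, liftW_smul, liftW_one, liftW_Pm]

/-- the Yang–Baxter equation -/
lemma YBE (u v : R) :
    liftW n (RmatG n (u - v)) * (lift13 (RmatG n u) * lift23 (RmatG n v))
      = (lift23 (RmatG n v) * lift13 (RmatG n u)) * liftW n (RmatG n (u - v)) := by
  rw [lift13_R, lift23_R, liftW_R]
  simp only [mul_add, add_mul, smul_mul_assoc, mul_smul_comm, one_mul, mul_one, smul_smul,
    permT_mul, trans_a, trans_b, trans_c, trans_d, trans_e, trans_f, trans_g, trans_h]
  module

end LiftPerm

section Endgame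

variable {R : Type*} [CommRing R] {n L : ℕ}

lemma Pm_mul_Pm : (PmG n : Matrix (Fin n × Fin n) (Fin n × Fin n) R) * PmG n = 1 := by
  ext p q
  simp only [PmG, Matrix.mul_apply, Matrix.one_apply, Fintype.sum_prod_type, Prod.ext_iff]
  simp [ite_and, mul_ite, Finset.sum_ite_eq, Finset.sum_ite_eq']
  try (split_ifs <;> simp_all)

lemma Rmat_inv (w : R) (h : IsUnit (w ^ 2 - 1)) :
    ∃ S' : Matrix (Fin n × Fin n) (Fin n × Fin n) R,
      S' * RmatG n w = 1 ∧ RmatG n w * S' = 1 := by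
  have key1 : (w • (1 : Matrix (Fin n × Fin n) (Fin n × Fin n) R) - PmG n) *
      (w • 1 + PmG n) = (w ^ 2 - 1) • 1 := by
    have hP := Pm_mul_Pm (n := n) (R := R)
    simp only [mul_add, sub_mul, smul_mul_assoc, mul_smul_comm, one_mul, mul_one, smul_smul, hP]
    module
  have key2 : (w • (1 : Matrix (Fin n × Fin n) (Fin n × Fin n) R) + PmG n) *
      (w • 1 - PmG n) = (w ^ 2 - 1) • 1 := by
    have hP := Pm_mul_Pm (n := n) (R := R)
    simp only [mul_sub, add_mul, smul_mul_assoc, mul_smul_comm, one_mul, mul_one, smul_smul, hP]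
    module
  refine ⟨((h.unit⁻¹ : Rˣ) : R) • (w • 1 - PmG n), ?_, ?_⟩
  · rw [RmatG_eq, smul_mul_assoc, key1, smul_smul, IsUnit.val_inv_mul, one_smul]
  · rw [RmatG_eq, mul_smul_comm, key2, smul_smul, IsUnit.val_inv_mul, one_smul]

lemma comb_eq_lift_mul' (M N : Matrix (Fin n × Fin n) (Fin n × Fin n) R) :
    comb M N = fun p q => (lift23 M * lift13 N)
      ((p.1.2, p.1.1), p.2) ((q.1.2, q.1.1), q.2) := by
  ext ⟨⟨a', b'⟩, c'⟩ ⟨⟨a, b⟩, c⟩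
  simp only [comb, lift13, lift23, Matrix.mul_apply, Fintype.sum_prod_type]
  simp [mul_ite, ite_mul, Finset.sum_ite_eq, Finset.sum_ite_eq']

/-- the generic commutation theorem -/
theorem tSumG_commute [NeZero L] (u v : R) (h : IsUnit ((u - v) ^ 2 - 1)) :
    tSumG n L (RmatG n u) * tSumG n L (RmatG n v)
      = tSumG n L (RmatG n v) * tSumG n L (RmatG n u) := by
  rw [tSumG_mul, tSumG_mul]
  obtain ⟨S', h1, h2⟩ := Rmat_inv (u - v) h
  have hswap : tSumG n L (comb (RmatG n v) (RmatG n u))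
      = tSumG n L (lift23 (RmatG n v) * lift13 (RmatG n u)) := by
    rw [comb_eq_lift_mul']
    exact tSumG_reindex (Equiv.prodComm (Fin n) (Fin n)) _
  rw [hswap, comb_eq_lift_mul]
  exact (tSumG_intertwine _ _ (RmatG n (u - v)) S' h1 h2 (YBE u v)).symm

end Endgame

section Map

variable {R S : Type*} [CommRing R] [CommRing S] {n L : ℕ}

lemma tSumG_map (f : R →+* S) (v : R) :
    (tSumG n L (RmatG n v)).map f = tSumG n L (RmatG n (f v)) := by
  ext α β
  simp only [tSumG, Matrix.map_apply, map_sum, map_prod]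
  refine Finset.sum_congr rfl fun ν _ => Finset.prod_congr rfl fun j _ => ?_
  simp [RmatG, apply_ite f]

end Map


/-- The row-to-row transfer matrices of the rational `su(n)` model commute:
`t(u) t(v) = t(v) t(u)` on `V^{⊗L}` for all spectral parameters `u, v ∈ ℂ`. -/
theorem transferMatrix_commute (n L : ℕ) (hn : 1 ≤ n) (hL : 1 ≤ L) (u v : ℂ) :
    transferMatrix n L u * transferMatrix n L v =
      transferMatrix n L v * transferMatrix n L u := by
  haveI : NeZero L := ⟨by omega⟩
  rw [transferMatrix_eq_tSumG, transferMatrix_eq_tSumG]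
  set a : Polynomial ℂ →+* RatFunc ℂ := (algebraMap (Polynomial ℂ) (RatFunc ℂ)) with ha
  set p : Polynomial ℂ := Polynomial.X + Polynomial.C u with hp
  set q : Polynomial ℂ := Polynomial.C v with hq
  have hpq : (p - q) ^ 2 - 1 ≠ 0 := by
    intro h0
    have h1 := congrArg (Polynomial.eval (2 - (u - v))) h0
    simp only [hp, hq, Polynomial.eval_sub, Polynomial.eval_pow, Polynomial.eval_add,
      Polynomial.eval_X, Polynomial.eval_C, Polynomial.eval_one, Polynomial.eval_zero] at h1
    have h3 : (3 : ℂ) = 0 := by linear_combination h1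
    norm_num at h3
  have hinj : Function.Injective a := RatFunc.algebraMap_injective ℂ
  have hK : IsUnit ((a p - a q) ^ 2 - 1) := by
    rw [← map_sub, ← map_pow, ← map_one a, ← map_sub, isUnit_iff_ne_zero]
    intro h0
    rw [← map_zero a] at h0
    exact hpq (hinj h0)
  have hcomm := tSumG_commute (n := n) (L := L) (a p) (a q) hK
  have hpoly : tSumG n L (RmatG n p) * tSumG n L (RmatG n q)
      = tSumG n L (RmatG n q) * tSumG n L (RmatG n p) := by
    have hmap : ((tSumG n L (RmatG n p) * tSumG n L (RmatG n q)).map a)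
        = ((tSumG n L (RmatG n q) * tSumG n L (RmatG n p)).map a) := by
      rw [Matrix.map_mul, Matrix.map_mul, tSumG_map, tSumG_map, hcomm]
    refine Matrix.ext fun α β => ?_
    have := congrArg (fun M => M α β) hmap
    simp only [Matrix.map_apply] at this
    exact hinj this
  have hmap2 := congrArg (fun M => M.map (Polynomial.evalRingHom (0 : ℂ))) hpoly
  simp only [Matrix.map_mul, tSumG_map] at hmap2
  have hp0 : (Polynomial.evalRingHom (0 : ℂ)) p = u := by simp [hp]
  have hq0 : (Polynomial.evalRingHom (0 : ℂ)) q = v := by simp [hq]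
  rw [hp0, hq0] at hmap2
  exact hmap2
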